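/- For the collisional-model channels Λ₁(ρ) = (1−2ε)ρ + ε(σ_Z ρ σ_Z + σ_X ρ σ_X) and Λ₂(ρ) = ((1−2ε)² + 4ε²)ρ + 2ε(1−2ε)(σ_Z ρ σ_Z + σ_X ρ σ_X), the unique linear intermediate map V₂₁ satisfying Λ₂ = V₂₁ ∘ Λ₁ (for 0 ≤ ε < 1/4, where Λ₁ is invertible) is a Pauli map V₂₁(ρ) = q₀ ρ + q_x σ_X ρ σ_X + q_y σ_Y ρ σ_Y + q_z σ_Z ρ σ_Z with q₀ + q_x + q_y + q_z = 1 and q_y < 0 for 0 < ε < 1/4; hence V₂₁ is not completely positive for these ε, witnessing non-Markovianity of the evolution. -/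

import Mathlib

open Matrix Complex ComplexOrder

abbrev Mat (d : ℕ) := Matrix (Fin d) (Fin d) ℂ

/-- The extension `I_n ⊗ Λ` of a matrix map `Λ` by the identity on a first tensor factor. -/
def matExt {α β : Type*} [Fintype α] [Fintype β] (n : ℕ)
    (Λ : Matrix α α ℂ → Matrix β β ℂ)
    (A : Matrix (Fin n × α) (Fin n × α) ℂ) :
    Matrix (Fin n × β) (Fin n × β) ℂ :=
  fun p q => Λ (fun k l => A (p.1, k) (q.1, l)) p.2 q.2

/-- The extension `Λ ⊗ I` of a matrix map `Λ` by the identity on a second tensor factor. -/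
def extSecond {α β : Type*} [Fintype α] [Fintype β] (n : ℕ)
    (Λ : Matrix α α ℂ → Matrix β β ℂ)
    (A : Matrix (α × Fin n) (α × Fin n) ℂ) :
    Matrix (β × Fin n) (β × Fin n) ℂ :=
  fun p q => Λ (fun k l => A (k, p.2) (l, q.2)) p.1 q.1

/-- A matrix map is positive if it preserves positive semidefiniteness. -/
def IsPosMap {α β : Type*} [Fintype α] [Fintype β]
    (Λ : Matrix α α ℂ → Matrix β β ℂ) : Prop :=
  ∀ A, A.PosSemidef → (Λ A).PosSemidef

/-- Complete positivity: every identity extension preserves positive semidefiniteness. -/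
def IsCP {α β : Type*} [Fintype α] [Fintype β]
    (Λ : Matrix α α ℂ → Matrix β β ℂ) : Prop :=
  ∀ (n : ℕ) (A : Matrix (Fin n × α) (Fin n × α) ℂ),
    A.PosSemidef → (matExt n Λ A).PosSemidef

/-- Trace preservation. -/
def IsTP {α β : Type*} [Fintype α] [Fintype β]
    (Λ : Matrix α α ℂ → Matrix β β ℂ) : Prop :=
  ∀ A, (Λ A).trace = A.trace

def IsCPTP {α β : Type*} [Fintype α] [Fintype β]
    (Λ : Matrix α α ℂ → Matrix β β ℂ) : Prop :=
  IsCP Λ ∧ IsTP Λ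

/-- The positive semidefinite square root, as `Matrix.PosSemidef.sqrt` was defined in the older Mathlib. -/
noncomputable def Matrix.PosSemidef.sqrt {n 𝕜 : Type*} [Fintype n] [DecidableEq n] [RCLike 𝕜]
    {A : Matrix n n 𝕜} (hA : A.PosSemidef) : Matrix n n 𝕜 :=
  hA.1.eigenvectorUnitary.1 * diagonal ((↑) ∘ (Real.sqrt ∘ hA.1.eigenvalues)) *
    (star hA.1.eigenvectorUnitary : Matrix n n 𝕜)

/-- The trace norm `‖A‖₁ = Tr √(AᴴA)`. -/
noncomputable def traceNorm {m : Type*} [Fintype m] [DecidableEq m] (A : Matrix m m ℂ) : ℝ :=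
  ((Matrix.posSemidef_conjTranspose_mul_self A).sqrt.trace).re

/-- The `n`-fold tensor power `Λ^{⊗n}` of a linear matrix map. -/
noncomputable def tensorPow {d : ℕ} (n : ℕ) (Λ : Mat d → Mat d)
    (A : Matrix (Fin n → Fin d) (Fin n → Fin d) ℂ) :
    Matrix (Fin n → Fin d) (Fin n → Fin d) ℂ :=
  fun p q => ∑ i : Fin n → Fin d, ∑ j : Fin n → Fin d,
    A i j * ∏ k, Λ (Matrix.single (i k) (j k) 1) (p k) (q k)

/-- The (normalized) Choi matrix `(I ⊗ Λ)(|φ₊⟩⟨φ₊|)`. -/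
noncomputable def choi {d : ℕ} (Λ : Mat d → Mat d) :
    Matrix (Fin d × Fin d) (Fin d × Fin d) ℂ :=
  fun p q => (1 / (d : ℂ)) * Λ (Matrix.single p.1 q.1 1) p.2 q.2

noncomputable def σX : Mat 2 := !![0, 1; 1, 0]
noncomputable def σY : Mat 2 := !![0, -Complex.I; Complex.I, 0]
noncomputable def σZ : Mat 2 := !![1, 0; 0, -1]

/-- The single-collision channel Λ₁. -/
noncomputable def Lam1 (ε : ℝ) (ρ : Mat 2) : Mat 2 :=
  ((1 - 2*ε : ℝ) : ℂ) • ρ + ((ε : ℝ) : ℂ) • (σZ * ρ * σZ + σX * ρ * σX)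

/-- The two-collision channel Λ₂. -/
noncomputable def Lam2 (ε : ℝ) (ρ : Mat 2) : Mat 2 :=
  (((1 - 2*ε)^2 + 4*ε^2 : ℝ) : ℂ) • ρ +
    ((2*ε*(1 - 2*ε) : ℝ) : ℂ) • (σZ * ρ * σZ + σX * ρ * σX)

/-- A general qubit Pauli map. -/
noncomputable def pauliMap (q0 qx qy qz : ℝ) (ρ : Mat 2) : Mat 2 :=
  (q0 : ℂ) • ρ + (qx : ℂ) • (σX * ρ * σX) + (qy : ℂ) • (σY * ρ * σY) + (qz : ℂ) • (σZ * ρ * σZ)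

/-- The qubit state with Bloch vector `(x, y, z)`. -/
noncomputable def bloch (x y z : ℝ) : Mat 2 :=
  (1/2 : ℂ) • !![1 + (z : ℂ), (x : ℂ) - Complex.I * (y : ℂ);
                 (x : ℂ) + Complex.I * (y : ℂ), 1 - (z : ℂ)]

/-- The coarse-grained state `λ(ρ ⊗ ρ)` of a qubit with Bloch `z`-component `rz`. -/
noncomputable def cg (rz : ℝ) : Mat 2 :=
  !![(((1 + rz)^2 / 4 : ℝ) : ℂ), 0;
     0, (((1 - rz)^2 / 4 + (1 - rz^2) / 2 : ℝ) : ℂ)]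


section Aux

lemma sigX_conj (ρ : Mat 2) : σX * ρ * σX = !![ρ 1 1, ρ 1 0; ρ 0 1, ρ 0 0] := by
  ext i j; fin_cases i <;> fin_cases j <;>
    simp [σX, Matrix.mul_apply, Matrix.vecMul, dotProduct, Fin.sum_univ_two]

lemma sigY_conj (ρ : Mat 2) : σY * ρ * σY = !![ρ 1 1, -ρ 1 0; -ρ 0 1, ρ 0 0] := by
  ext i j; fin_cases i <;> fin_cases j <;>
    simp [σY, Matrix.mul_apply, Matrix.vecMul, dotProduct, Fin.sum_univ_two] <;>
      ring_nf <;> simp [Complex.I_sq]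

lemma sigZ_conj (ρ : Mat 2) : σZ * ρ * σZ = !![ρ 0 0, -ρ 0 1; -ρ 1 0, ρ 1 1] := by
  ext i j; fin_cases i <;> fin_cases j <;>
    simp [σZ, Matrix.mul_apply, Matrix.vecMul, dotProduct, Fin.sum_univ_two]

lemma pauli_apply (q0 qx qy qz : ℝ) (ρ : Mat 2) :
    pauliMap q0 qx qy qz ρ =
    !![(q0:ℂ) * ρ 0 0 + qx * ρ 1 1 + qy * ρ 1 1 + qz * ρ 0 0,
       (q0:ℂ) * ρ 0 1 + qx * ρ 1 0 - qy * ρ 1 0 - qz * ρ 0 1;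
       (q0:ℂ) * ρ 1 0 + qx * ρ 0 1 - qy * ρ 0 1 - qz * ρ 1 0,
       (q0:ℂ) * ρ 1 1 + qx * ρ 0 0 + qy * ρ 0 0 + qz * ρ 1 1] := by
  ext i j
  fin_cases i <;> fin_cases j <;>
    simp [pauliMap, sigX_conj, sigY_conj, sigZ_conj, Matrix.add_apply,
      Matrix.smul_apply, smul_eq_mul] <;> ring

lemma pauli_id (ρ : Mat 2) : pauliMap 1 0 0 0 ρ = ρ := by
  rw [pauli_apply]; ext i j; fin_cases i <;> fin_cases j <;> simp

lemma Lam1_eq (ε : ℝ) (ρ : Mat 2) : Lam1 ε ρ = pauliMap (1-2*ε) ε 0 ε ρ := by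
  ext i j
  fin_cases i <;> fin_cases j <;>
    · simp [Lam1, pauli_apply, sigX_conj, sigZ_conj, Matrix.add_apply,
        Matrix.smul_apply, smul_eq_mul]
      push_cast
      ring

lemma Lam2_eq (ε : ℝ) (ρ : Mat 2) :
    Lam2 ε ρ = pauliMap ((1-2*ε)^2+4*ε^2) (2*ε*(1-2*ε)) 0 (2*ε*(1-2*ε)) ρ := by
  ext i j
  fin_cases i <;> fin_cases j <;>
    · simp [Lam2, pauli_apply, sigX_conj, sigZ_conj, Matrix.add_apply,
        Matrix.smul_apply, smul_eq_mul]
      push_cast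
      ring

lemma pauli_comp (a0 ax ay az b0 bx by' bz : ℝ) (ρ : Mat 2) :
    pauliMap a0 ax ay az (pauliMap b0 bx by' bz ρ) =
    pauliMap (a0*b0+ax*bx+ay*by'+az*bz) (a0*bx+ax*b0+ay*bz+az*by')
      (a0*by'+ay*b0+ax*bz+az*bx) (a0*bz+az*b0+ax*by'+ay*bx) ρ := by
  rw [pauli_apply b0, pauli_apply, pauli_apply]
  ext i j
  fin_cases i <;> fin_cases j <;>
    · simp
      push_cast
      ring

lemma pauli_congr {a0 ax ay az b0 bx by' bz : ℝ} (ρ : Mat 2)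
    (h0 : a0 = b0) (hx : ax = bx) (hy : ay = by') (hz : az = bz) :
    pauliMap a0 ax ay az ρ = pauliMap b0 bx by' bz ρ := by rw [h0, hx, hy, hz]

lemma lam1_right_inverse (ε : ℝ) (h1 : 0 < ε) (h2 : ε < 1/4) (ρ : Mat 2) :
    Lam1 ε (pauliMap ((1 + 2/(1-2*ε) + 1/(1-4*ε))/4) ((1 - 1/(1-4*ε))/4)
      ((1 - 2/(1-2*ε) + 1/(1-4*ε))/4) ((1 - 1/(1-4*ε))/4) ρ) = ρ := by
  have hc : (1 - 2*ε) ≠ 0 := by nlinarith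
  have hd : (1 - 4*ε) ≠ 0 := by nlinarith
  rw [Lam1_eq, pauli_comp,
    pauli_congr ρ (show _ = (1:ℝ) by field_simp [hc, hd, show (1:ℝ) - ε*4 ≠ 0 by nlinarith]; ring) (show _ = (0:ℝ) by field_simp [hc, hd, show (1:ℝ) - ε*4 ≠ 0 by nlinarith]; ring)
      (show _ = (0:ℝ) by field_simp [hc, hd, show (1:ℝ) - ε*4 ≠ 0 by nlinarith]; ring) (show _ = (0:ℝ) by field_simp [hc, hd, show (1:ℝ) - ε*4 ≠ 0 by nlinarith]; ring), pauli_id]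

lemma intertwine (ε : ℝ) (h1 : 0 < ε) (h2 : ε < 1/4) (ρ : Mat 2) :
    Lam2 ε ρ = pauliMap (((1-2*ε)^2+2*ε^2)/(1-2*ε)) ε (-(2*ε^2)/(1-2*ε)) ε (Lam1 ε ρ) := by
  have hc : (1 - 2*ε) ≠ 0 := by nlinarith
  rw [Lam2_eq, Lam1_eq, pauli_comp]
  exact pauli_congr ρ (by field_simp; ring) (by field_simp; ring) (by field_simp; ring)
    (by field_simp; ring)

noncomputable def phiAux : Fin 2 × Fin 2 → ℂ := fun p => if p.1 = p.2 then 1 else 0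

noncomputable def bellAux : Matrix (Fin 2 × Fin 2) (Fin 2 × Fin 2) ℂ :=
  fun p q => phiAux p * star (phiAux q)

lemma bellAux_psd : bellAux.PosSemidef := by
  rw [Matrix.posSemidef_iff_dotProduct_mulVec]
  constructor
  · ext p q; simp [bellAux, Matrix.conjTranspose_apply, mul_comm]
  · intro x
    have : (star x) ⬝ᵥ bellAux.mulVec x
        = star (x (0,0) + x (1,1)) * (x (0,0) + x (1,1)) := by
      simp [dotProduct, Matrix.mulVec, bellAux, phiAux, Fintype.sum_prod_type,
        Fin.sum_univ_two]
      ring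
    rw [this]
    exact star_mul_self_nonneg _

noncomputable def wvAux : Fin 2 × Fin 2 → ℂ :=
  fun p => if p = (0,1) then Complex.I else if p = (1,0) then -Complex.I else 0

lemma pauli_not_CP (q0 qx qy qz : ℝ) (hy : qy < 0) : ¬ IsCP (pauliMap q0 qx qy qz) := by
  intro h
  have hpsd := (h 2 bellAux bellAux_psd).dotProduct_mulVec_nonneg wvAux
  have key : (star wvAux) ⬝ᵥ (matExt 2 (pauliMap q0 qx qy qz) bellAux).mulVec wvAux
      = ((4*qy : ℝ) : ℂ) := by
    have hP := fun f : Fin 2 → Fin 2 → ℂ => pauli_apply q0 qx qy qz f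
    simp [dotProduct, Matrix.mulVec, matExt, hP, bellAux, phiAux, wvAux,
      Fintype.sum_prod_type, Fin.sum_univ_two, Prod.ext_iff]
    push_cast
    ring_nf
    simp [Complex.I_sq]
  rw [key] at hpsd
  rw [Complex.zero_le_real] at hpsd
  linarith

end Aux

/-- for `0 < ε < 1/4` the unique linear intermediate map `V₂₁` with
`Λ₂ = V₂₁ ∘ Λ₁` is a Pauli map with coefficients summing to 1 and `q_y < 0`; hence `V₂₁`
is not completely positive, witnessing non-Markovianity. -/
theorem intermediate_map_not_CP (ε : ℝ) (h1 : 0 < ε) (h2 : ε < 1/4) :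
    ∃ q0 qx qy qz : ℝ,
      q0 + qx + qy + qz = 1 ∧ qy < 0 ∧
      (∀ ρ : Mat 2, Lam2 ε ρ = pauliMap q0 qx qy qz (Lam1 ε ρ)) ∧
      ¬ IsCP (pauliMap q0 qx qy qz) ∧
      ∀ W : Mat 2 → Mat 2, IsLinearMap ℂ W →
        (∀ ρ : Mat 2, Lam2 ε ρ = W (Lam1 ε ρ)) →
        ∀ ρ : Mat 2, W ρ = pauliMap q0 qx qy qz ρ := by
  have hc : (1 - 2*ε) ≠ 0 := by nlinarith
  have hcp : (0:ℝ) < 1 - 2*ε := by nlinarith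
  refine ⟨((1-2*ε)^2+2*ε^2)/(1-2*ε), ε, -(2*ε^2)/(1-2*ε), ε, ?_, ?_, ?_, ?_, ?_⟩
  · field_simp
    ring
  · rw [neg_div]
    have : (0:ℝ) < 2*ε^2 / (1-2*ε) := div_pos (by positivity) hcp
    linarith
  · exact fun ρ => intertwine ε h1 h2 ρ
  · refine pauli_not_CP _ _ _ _ ?_
    rw [neg_div]
    have : (0:ℝ) < 2*ε^2 / (1-2*ε) := div_pos (by positivity) hcp
    linarith
  · intro W _ hWc ρ
    have hinv := lam1_right_inverse ε h1 h2 ρ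
    calc W ρ = W (Lam1 ε (pauliMap ((1 + 2/(1-2*ε) + 1/(1-4*ε))/4) ((1 - 1/(1-4*ε))/4)
        ((1 - 2/(1-2*ε) + 1/(1-4*ε))/4) ((1 - 1/(1-4*ε))/4) ρ)) := by rw [hinv]
      _ = Lam2 ε (pauliMap ((1 + 2/(1-2*ε) + 1/(1-4*ε))/4) ((1 - 1/(1-4*ε))/4)
        ((1 - 2/(1-2*ε) + 1/(1-4*ε))/4) ((1 - 1/(1-4*ε))/4) ρ) := (hWc _).symm
      _ = pauliMap (((1-2*ε)^2+2*ε^2)/(1-2*ε)) ε (-(2*ε^2)/(1-2*ε)) ε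
            (Lam1 ε (pauliMap ((1 + 2/(1-2*ε) + 1/(1-4*ε))/4) ((1 - 1/(1-4*ε))/4)
        ((1 - 2/(1-2*ε) + 1/(1-4*ε))/4) ((1 - 1/(1-4*ε))/4) ρ)) := intertwine ε h1 h2 _
      _ = pauliMap (((1-2*ε)^2+2*ε^2)/(1-2*ε)) ε (-(2*ε^2)/(1-2*ε)) ε ρ := by rw [hinv]
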